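/- Let T be a ℤ-weighted tile made up of rectangles whose corners all have rational coordinates, and assume the weighted area of T is not zero. Then there exists a positive integer w such that the family T(ℕ) = {T(k) : k ∈ ℕ, k ≥ 1} of positive-integer rescalings of T ℤ-tiles w times a square; that is, there exist s > 0, integers a₁,…,a_n, positive integers k₁,…,k_n and tiles T̃ᵢ, each a translate of T(kᵢ), with w·𝟙_{[0,s)×[0,s)} = ∑ᵢ aᵢ·T̃ᵢ. -/

import Mathlib

open Finset

/-- Indicator (with value 1) of the rectangle `[b1,b2) × [c1,c2)`, ℤ-valued. -/
noncomputable def rectIndZ (b1 b2 c1 c2 : ℝ) (p : ℝ × ℝ) : ℤ :=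
  if b1 ≤ p.1 ∧ p.1 < b2 ∧ c1 ≤ p.2 ∧ p.2 < c2 then 1 else 0

/-! ### Laurent-polynomial model: the group algebra `ℤ[ℤ²]` -/

abbrev R2 := AddMonoidAlgebra ℤ (ℤ × ℤ)

noncomputable def sing (d : ℤ × ℤ) (r : ℤ) : R2 := AddMonoidAlgebra.single d r

noncomputable def spread (κ : ℤ) (r : ℤ) (a b c e : ℤ) : R2 :=
  ∑ u ∈ Finset.Ico a b, ∑ v ∈ Finset.Ico c e, sing (κ*u, κ*v) r

noncomputable def rectc (r : ℤ) (a b c e : ℤ) : R2 :=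
  ∑ u ∈ Finset.Ico a b, ∑ v ∈ Finset.Ico c e, sing (u, v) r

lemma sing_mul_sing (d e : ℤ×ℤ) (r s : ℤ) : sing d r * sing e s = sing (d+e) (r*s) :=
  AddMonoidAlgebra.single_mul_single ..

lemma sing_sum {ι : Type*} (s : Finset ι) (g : ι → ℤ) (d : ℤ×ℤ) :
    sing d (∑ i ∈ s, g i) = ∑ i ∈ s, sing d (g i) := by
  classical
  induction s using Finset.cons_induction with
  | empty => simp [sing]
  | cons a s ha ih =>
      rw [Finset.sum_cons, Finset.sum_cons, ← ih]
      exact AddMonoidAlgebra.single_add d _ _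

lemma rectc_apply (r a b c e : ℤ) (U V : ℤ) :
    (rectc r a b c e).coeff (U, V) = if a ≤ U ∧ U < b ∧ c ≤ V ∧ V < e then r else 0 := by
  unfold rectc
  rw [AddMonoidAlgebra.coeff_sum, Finsupp.finset_sum_apply]
  have h1 : ∀ u : ℤ, (∑ v ∈ Finset.Ico c e, sing (u, v) r).coeff (U, V)
      = if u = U ∧ c ≤ V ∧ V < e then r else 0 := by
    intro u
    rw [AddMonoidAlgebra.coeff_sum, Finsupp.finset_sum_apply]
    have h2 : ∀ v : ℤ, (sing (u, v) r).coeff (U, V) = if u = U ∧ v = V then r else 0 := by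
      intro v
      rw [sing, AddMonoidAlgebra.coeff_single, Finsupp.single_apply]
      congr 1
      simp [Prod.ext_iff]
    simp only [h2]
    by_cases hu : u = U
    · subst hu
      simp only [true_and]
      by_cases hV : V ∈ Finset.Ico c e
      · rw [Finset.sum_ite_eq' _ V, if_pos hV]
        simp only [Finset.mem_Ico] at hV
        simp [hV]
      · rw [Finset.sum_ite_eq' _ V, if_neg hV]
        simp only [Finset.mem_Ico] at hV
        simp [hV]
    · simp [hu]
  simp only [h1, ite_and]
  rw [Finset.sum_ite_eq' _ U]
  by_cases h1' : a ≤ U <;> by_cases h2' : U < b <;>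
    simp [Finset.mem_Ico, h1', h2', ite_and]

lemma expand1d {M : Type*} [AddCommMonoid M] (κ : ℤ) (hκ : 0 < κ) (a b d : ℤ) (f : ℤ → M) :
    ∑ x ∈ Finset.Ico (0:ℤ) κ, ∑ u ∈ Finset.Ico a b, f (d + x + κ*u)
      = ∑ U ∈ Finset.Ico (κ*a+d) (κ*b+d), f U := by
  rw [← Finset.sum_product']
  apply Finset.sum_nbij' (i := fun p => d + p.1 + κ * p.2)
    (j := fun U => ((U - d) % κ, (U - d) / κ))
  · rintro ⟨x, u⟩ hp
    simp only [Finset.mem_product, Finset.mem_Ico] at hp ⊢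
    obtain ⟨⟨hx0, hxκ⟩, ⟨hau, hub⟩⟩ := hp
    constructor <;> nlinarith
  · intro U hU
    simp only [Finset.mem_Ico] at hU
    simp only [Finset.mem_product, Finset.mem_Ico]
    refine ⟨⟨Int.emod_nonneg _ (by omega), Int.emod_lt_of_pos _ hκ⟩, ?_, ?_⟩
    · rw [Int.le_ediv_iff_mul_le hκ]; linarith [mul_comm a κ]
    · rw [Int.ediv_lt_iff_lt_mul hκ]; linarith [mul_comm b κ]
  · rintro ⟨x, u⟩ hp
    simp only [Finset.mem_product, Finset.mem_Ico] at hp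
    obtain ⟨⟨hx0, hxκ⟩, _⟩ := hp
    have h1 : d + x + κ * u - d = x + κ * u := by ring
    rw [h1]
    have h2 : (x + κ * u) % κ = x := by
      rw [Int.add_mul_emod_self_left, Int.emod_eq_of_lt hx0 hxκ]
    have h3 : (x + κ * u) / κ = u := by
      rw [Int.add_mul_ediv_left _ _ (by omega : κ ≠ 0), Int.ediv_eq_zero_of_lt hx0 hxκ]; ring
    simp [h2, h3]
  · intro U hU
    have := Int.emod_add_mul_ediv (U - d) κ
    simp only
    omega
  · rintro ⟨x, u⟩ hp; rfl

lemma master (κ : ℤ) (hκ : 0 < κ) (d1 d2 r s a b c e : ℤ) :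
    sing (d1,d2) r * rectc 1 0 κ 0 κ * spread κ s a b c e
      = rectc (r*s) (κ*a+d1) (κ*b+d1) (κ*c+d2) (κ*e+d2) := by
  rw [show (r*s) = r*1*s by ring]
  have step1 : sing (d1,d2) r * rectc 1 0 κ 0 κ * spread κ s a b c e
      = ∑ u ∈ Finset.Ico a b, ∑ v ∈ Finset.Ico c e, ∑ x ∈ Finset.Ico (0:ℤ) κ,
          ∑ y ∈ Finset.Ico (0:ℤ) κ, sing (d1 + x + κ*u, d2 + y + κ*v) (r*1*s) := by
    unfold rectc spread
    simp only [Finset.mul_sum, Finset.sum_mul, sing_mul_sing, Prod.mk_add_mk]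
  rw [step1]
  have step2 : (∑ u ∈ Finset.Ico a b, ∑ v ∈ Finset.Ico c e, ∑ x ∈ Finset.Ico (0:ℤ) κ,
          ∑ y ∈ Finset.Ico (0:ℤ) κ, sing (d1 + x + κ*u, d2 + y + κ*v) (r*1*s))
      = ∑ x ∈ Finset.Ico (0:ℤ) κ, ∑ u ∈ Finset.Ico a b, ∑ y ∈ Finset.Ico (0:ℤ) κ,
          ∑ v ∈ Finset.Ico c e, sing (d1 + x + κ*u, d2 + y + κ*v) (r*1*s) := by
    calc (∑ u ∈ Finset.Ico a b, ∑ v ∈ Finset.Ico c e, ∑ x ∈ Finset.Ico (0:ℤ) κ,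
          ∑ y ∈ Finset.Ico (0:ℤ) κ, sing (d1 + x + κ*u, d2 + y + κ*v) (r*1*s))
        = ∑ u ∈ Finset.Ico a b, ∑ x ∈ Finset.Ico (0:ℤ) κ, ∑ v ∈ Finset.Ico c e,
          ∑ y ∈ Finset.Ico (0:ℤ) κ, sing (d1 + x + κ*u, d2 + y + κ*v) (r*1*s) :=
          Finset.sum_congr rfl fun u _ => Finset.sum_comm
      _ = ∑ x ∈ Finset.Ico (0:ℤ) κ, ∑ u ∈ Finset.Ico a b, ∑ v ∈ Finset.Ico c e,
          ∑ y ∈ Finset.Ico (0:ℤ) κ, sing (d1 + x + κ*u, d2 + y + κ*v) (r*1*s) :=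
          Finset.sum_comm
      _ = ∑ x ∈ Finset.Ico (0:ℤ) κ, ∑ u ∈ Finset.Ico a b, ∑ y ∈ Finset.Ico (0:ℤ) κ,
          ∑ v ∈ Finset.Ico c e, sing (d1 + x + κ*u, d2 + y + κ*v) (r*1*s) :=
          Finset.sum_congr rfl fun x _ => Finset.sum_congr rfl fun u _ => Finset.sum_comm
  rw [step2]
  rw [expand1d κ hκ a b d1
    (fun U => ∑ y ∈ Finset.Ico (0:ℤ) κ, ∑ v ∈ Finset.Ico c e, sing (U, d2 + y + κ*v) (r*1*s))]
  unfold rectc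
  apply Finset.sum_congr rfl; intro U _
  exact expand1d κ hκ c e d2 (fun V => sing (U, V) (r*1*s))

lemma sing_zero_mul (r s a b c e : ℤ) :
    sing 0 r * rectc s a b c e = rectc (r*s) a b c e := by
  unfold rectc
  rw [Finset.mul_sum]
  apply Finset.sum_congr rfl; intro u _
  rw [Finset.mul_sum]
  apply Finset.sum_congr rfl; intro v _
  rw [sing_mul_sing, zero_add]

/-! ### Rescaling -/

noncomputable def Pk (P : R2) (κ : ℕ) : R2 :=
  AddMonoidAlgebra.ofCoeff (Finsupp.mapDomain (fun m : ℤ×ℤ => ((κ:ℤ) * m.1, (κ:ℤ) * m.2)) P.coeff)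

lemma Pk_singles (P : R2) (κ : ℕ) :
    Pk P κ = ∑ m ∈ P.coeff.support, sing ((κ:ℤ)*m.1, (κ:ℤ)*m.2) (P.coeff m) := by
  unfold Pk Finsupp.mapDomain Finsupp.sum
  rw [AddMonoidAlgebra.ofCoeff_sum]
  rfl

lemma Pk_rectc (κ : ℕ) (r a b c e : ℤ) :
    Pk (rectc r a b c e) κ = spread (κ:ℤ) r a b c e := by
  unfold Pk rectc spread
  rw [AddMonoidAlgebra.coeff_sum, Finsupp.mapDomain_finset_sum, AddMonoidAlgebra.ofCoeff_sum]
  apply Finset.sum_congr rfl; intro u _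
  rw [AddMonoidAlgebra.coeff_sum, Finsupp.mapDomain_finset_sum, AddMonoidAlgebra.ofCoeff_sum]
  apply Finset.sum_congr rfl; intro v _
  exact congrArg AddMonoidAlgebra.ofCoeff Finsupp.mapDomain_single

lemma Pk_sum {ι : Type*} (s : Finset ι) (f : ι → R2) (κ : ℕ) :
    Pk (∑ i ∈ s, f i) κ = ∑ i ∈ s, Pk (f i) κ := by
  unfold Pk; rw [AddMonoidAlgebra.coeff_sum, Finsupp.mapDomain_finset_sum, AddMonoidAlgebra.ofCoeff_sum]

lemma sing_isUnit (d : ℤ×ℤ) : IsUnit (sing d 1) := by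
  apply IsUnit.of_mul_eq_one (sing (-d) 1)
  rw [sing_mul_sing, add_neg_cancel, mul_one]
  rfl

/-! ### The key ideal-membership lemma -/

lemma key_ideal {R : Type*} [CommRing R] (I : Ideal R) :
    ∀ (n : ℕ) (c t : Fin n → R), (∀ j, IsUnit (t j)) →
    (∀ k : ℕ, 1 ≤ k → ∑ j, c j * t j ^ k ∈ I) →
    ∀ k : ℕ, ∑ j, c j * t j ^ k ∈ I := by
  intro n
  induction n with
  | zero => intro c t hu hmem k; simp
  | succ n ih =>
    intro c t hu hmem k
    have step : ∀ k : ℕ, 1 ≤ k →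
        ∑ j : Fin n, (c j.succ * (t j.succ - t 0)) * (t j.succ) ^ k ∈ I := by
      intro k hk
      have e : (∑ j, c j * t j ^ (k+1)) - t 0 * ∑ j, c j * t j ^ k
          = ∑ j : Fin n, (c j.succ * (t j.succ - t 0)) * (t j.succ) ^ k := by
        rw [Finset.mul_sum, ← Finset.sum_sub_distrib, Fin.sum_univ_succ]
        have h0 : c 0 * t 0 ^ (k+1) - t 0 * (c 0 * t 0 ^ k) = 0 := by ring
        rw [h0, zero_add]
        exact Finset.sum_congr rfl fun j _ => by ring
      have := Ideal.sub_mem _ (hmem (k+1) (by omega))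
        (Ideal.mul_mem_left _ (t 0) (hmem k hk))
      rwa [e] at this
    have hall := ih (fun j => c j.succ * (t j.succ - t 0)) (fun j => t j.succ)
      (fun j => hu _) step
    rcases Nat.eq_zero_or_pos k with hk | hk
    · subst hk
      have h0 := hall 0
      have g1 := hmem 1 le_rfl
      have e2 : (∑ j, c j * t j ^ 1)
            - ∑ j : Fin n, (c j.succ * (t j.succ - t 0)) * (t j.succ) ^ 0
          = t 0 * ∑ j : Fin (n+1), c j * t j ^ 0 := by
        rw [Finset.mul_sum, Fin.sum_univ_succ (f := fun j => c j * t j ^ 1),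
          Fin.sum_univ_succ (f := fun j => t 0 * (c j * t j ^ 0)),
          add_sub_assoc, ← Finset.sum_sub_distrib]
        congr 1
        · ring
        · exact Finset.sum_congr rfl fun j _ => by ring
      have ht : t 0 * ∑ j : Fin (n+1), c j * t j ^ 0 ∈ I := by
        rw [← e2]; exact Ideal.sub_mem _ g1 h0
      obtain ⟨u, hu0⟩ := hu 0
      have h3 : (↑u⁻¹ : R) * (t 0 * ∑ j : Fin (n+1), c j * t j ^ 0) ∈ I :=
        Ideal.mul_mem_left _ _ ht
      rwa [← mul_assoc, ← hu0, Units.inv_mul, one_mul] at h3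
    · exact hmem k hk

lemma const_mem_span (P : R2) :
    sing 0 (∑ m ∈ P.coeff.support, P.coeff m)
      ∈ Ideal.span (Set.range fun k : ℕ => Pk P (k+1)) := by
  set I := Ideal.span (Set.range fun k : ℕ => Pk P (k+1)) with hI
  set e := P.coeff.support.equivFin with he
  have hsum : ∀ (F : (ℤ×ℤ) → R2),
      (∑ j : Fin P.coeff.support.card, F ((e.symm j) : ℤ×ℤ)) = ∑ m ∈ P.coeff.support, F m := by
    intro F
    rw [← Finset.sum_coe_sort P.coeff.support F]
    exact Fintype.sum_equiv e.symm _ _ (fun j => rfl)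
  have hterm : ∀ (k : ℕ) (m : ℤ×ℤ), sing 0 (P.coeff m) * sing m 1 ^ k
      = sing ((k:ℤ)*m.1, (k:ℤ)*m.2) (P.coeff m) := by
    intro k m
    rw [sing, sing, AddMonoidAlgebra.single_pow, AddMonoidAlgebra.single_mul_single]
    rw [one_pow, mul_one, zero_add]
    show AddMonoidAlgebra.single (k • m) (P.coeff m) = _
    rw [Prod.smul_def]
    simp only [nsmul_eq_mul]
    rfl
  have happ := key_ideal I P.coeff.support.card
      (fun j => sing 0 (P.coeff ((e.symm j) : ℤ×ℤ)))
      (fun j => sing ((e.symm j) : ℤ×ℤ) 1)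
      (fun j => sing_isUnit _) ?_ 0
  · have : ∑ j : Fin P.coeff.support.card,
        sing 0 (P.coeff ((e.symm j) : ℤ×ℤ)) * sing ((e.symm j) : ℤ×ℤ) 1 ^ 0
        = sing 0 (∑ m ∈ P.coeff.support, P.coeff m) := by
      simp only [pow_zero, mul_one]
      rw [hsum (fun m => sing 0 (P.coeff m))]
      rw [sing_sum]
    rwa [this] at happ
  · intro k hk
    have : ∑ j : Fin P.coeff.support.card,
        sing 0 (P.coeff ((e.symm j) : ℤ×ℤ)) * sing ((e.symm j) : ℤ×ℤ) 1 ^ k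
        = Pk P k := by
      simp only [hterm k]
      rw [hsum (fun m => sing ((k:ℤ)*m.1, (k:ℤ)*m.2) (P.coeff m)), Pk_singles]
    rw [this]
    apply Ideal.subset_span
    refine ⟨k-1, ?_⟩
    show Pk P (k-1+1) = Pk P k
    congr 1
    omega

/-! ### Sum of coefficients -/

noncomputable def coefSum : R2 →+ ℤ where
  toFun f := f.coeff.sum fun _ r => r
  map_zero' := Finsupp.sum_zero_index
  map_add' f g := by
    exact Finsupp.sum_add_index' (h := fun (_ : ℤ×ℤ) (r : ℤ) => r) (fun _ => rfl) (fun _ _ _ => rfl)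

lemma coefSum_sing (d : ℤ×ℤ) (r : ℤ) : coefSum (sing d r) = r := by
  show (Finsupp.single d r).sum (fun _ r => r) = r
  exact Finsupp.sum_single_index rfl

lemma coefSum_eq (f : R2) : coefSum f = ∑ m ∈ f.coeff.support, f.coeff m := by
  show f.coeff.sum (fun _ r => r) = _
  rw [Finsupp.sum]

lemma coefSum_rectc (r a b c e : ℤ) (hab : a ≤ b) (hce : c ≤ e) :
    coefSum (rectc r a b c e) = (b - a) * (e - c) * r := by
  unfold rectc
  rw [map_sum]
  have h1 : ∀ u : ℤ, coefSum (∑ v ∈ Finset.Ico c e, sing (u, v) r) = (e - c) * r := by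
    intro u
    rw [map_sum]
    simp only [coefSum_sing]
    rw [Finset.sum_const, nsmul_eq_mul, Int.card_Ico_of_le _ _ hce]
  simp only [h1]
  rw [Finset.sum_const, nsmul_eq_mul, Int.card_Ico_of_le _ _ hab]
  ring

/-! ### Dictionary lemmas -/

lemma cond_left (q κ : ℕ) (hq : 0 < q) (hκ : 0 < κ) (B E : ℤ) (β : ℚ) (x : ℝ)
    (hB : (B:ℚ) = β * q) :
    ((β:ℝ) ≤ (x - (E:ℝ)/(q:ℝ)) / (κ:ℝ)) ↔ ((κ:ℤ) * B + E ≤ ⌊(q:ℝ) * x⌋) := by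
  have hq' : (0:ℝ) < q := by exact_mod_cast hq
  have hκ' : (0:ℝ) < κ := by exact_mod_cast hκ
  have hBr : (B:ℝ) = (β:ℝ) * q := by exact_mod_cast hB
  rw [Int.le_floor]
  push_cast
  rw [le_div_iff₀ hκ']
  constructor
  · intro h
    have h2 := mul_le_mul_of_nonneg_right h hq'.le
    have h3 : ((E:ℝ)/q) * q = E := div_mul_cancel₀ _ hq'.ne'
    nlinarith [h2, h3, hBr]
  · intro h
    have h3 : ((E:ℝ)/q) * q = E := div_mul_cancel₀ _ hq'.ne'
    have key : ((β:ℝ) * κ) * q ≤ (x - (E:ℝ)/q) * q := by nlinarith [hBr]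
    exact le_of_mul_le_mul_right key hq'

lemma cond_right (q κ : ℕ) (hq : 0 < q) (hκ : 0 < κ) (B E : ℤ) (β : ℚ) (x : ℝ)
    (hB : (B:ℚ) = β * q) :
    ((x - (E:ℝ)/(q:ℝ)) / (κ:ℝ) < (β:ℝ)) ↔ (⌊(q:ℝ) * x⌋ < (κ:ℤ) * B + E) := by
  have hq' : (0:ℝ) < q := by exact_mod_cast hq
  have hκ' : (0:ℝ) < κ := by exact_mod_cast hκ
  have hBr : (B:ℝ) = (β:ℝ) * q := by exact_mod_cast hB
  rw [Int.floor_lt]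
  push_cast
  rw [div_lt_iff₀ hκ']
  constructor
  · intro h
    have h2 := mul_lt_mul_of_pos_right h hq'
    have h3 : ((E:ℝ)/q) * q = E := div_mul_cancel₀ _ hq'.ne'
    nlinarith [h2, h3, hBr]
  · intro h
    have h3 : ((E:ℝ)/q) * q = E := div_mul_cancel₀ _ hq'.ne'
    have key : (x - (E:ℝ)/q) * q < ((β:ℝ) * κ) * q := by nlinarith [hBr]
    exact lt_of_mul_lt_mul_right key hq'.le

lemma sq_left (q : ℕ) (hq : 0 < q) (x : ℝ) : ((0:ℝ) ≤ x) ↔ (0 ≤ ⌊(q:ℝ) * x⌋) := by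
  have hq' : (0:ℝ) < q := by exact_mod_cast hq
  rw [Int.le_floor]
  push_cast
  constructor
  · intro h; positivity
  · intro h; nlinarith

lemma sq_right (q m : ℕ) (hq : 0 < q) (x : ℝ) :
    (x < (m:ℝ)/(q:ℝ)) ↔ (⌊(q:ℝ) * x⌋ < (m:ℤ)) := by
  have hq' : (0:ℝ) < q := by exact_mod_cast hq
  rw [Int.floor_lt]
  push_cast
  rw [lt_div_iff₀ hq', mul_comm]

lemma int_of_den_dvd (r : ℚ) (q : ℕ) (h : r.den ∣ q) : ∃ B : ℤ, (B:ℚ) = r * q := by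
  obtain ⟨t, ht⟩ := h
  refine ⟨r.num * t, ?_⟩
  have hd : ((r.den:ℚ)) ≠ 0 := by exact_mod_cast r.den_pos.ne'
  have key : r * (r.den:ℚ) = (r.num:ℚ) := (eq_div_iff hd).mp (Rat.num_div_den r).symm
  rw [ht]
  push_cast
  rw [← key]
  ring

lemma eval_rectc_sq (q M : ℕ) (hq : 0 < q) (A : ℤ) (p : ℝ × ℝ) :
    (rectc A 0 (M:ℤ) 0 (M:ℤ)).coeff (⌊(q:ℝ)*p.1⌋, ⌊(q:ℝ)*p.2⌋)
      = A * rectIndZ 0 ((M:ℝ)/(q:ℝ)) 0 ((M:ℝ)/(q:ℝ)) p := by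
  rw [rectc_apply, rectIndZ]
  have hcong : (0 ≤ ⌊(q:ℝ)*p.1⌋ ∧ ⌊(q:ℝ)*p.1⌋ < (M:ℤ) ∧ 0 ≤ ⌊(q:ℝ)*p.2⌋ ∧ ⌊(q:ℝ)*p.2⌋ < (M:ℤ))
      ↔ ((0:ℝ) ≤ p.1 ∧ p.1 < (M:ℝ)/(q:ℝ) ∧ (0:ℝ) ≤ p.2 ∧ p.2 < (M:ℝ)/(q:ℝ)) := by
    rw [← sq_left q hq p.1, ← sq_right q M hq p.1, ← sq_left q hq p.2, ← sq_right q M hq p.2]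
  rw [if_congr hcong rfl rfl]
  split_ifs <;> ring

theorem Tnat_tiles_weighted_square
    (T : ℝ × ℝ → ℤ) (n : ℕ) (a : Fin n → ℤ) (b1 b2 c1 c2 : Fin n → ℚ)
    (hb : ∀ i, b1 i < b2 i) (hc : ∀ i, c1 i < c2 i)
    (hT : ∀ p, T p = ∑ i, a i * rectIndZ (b1 i) (b2 i) (c1 i) (c2 i) p)
    (harea : (∑ i, (a i : ℚ) * (b2 i - b1 i) * (c2 i - c1 i)) ≠ 0) :
    ∃ w : ℕ, 0 < w ∧
      ∃ (s : ℝ), 0 < s ∧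
        ∃ (N : ℕ) (c : Fin N → ℤ) (k : Fin N → ℕ) (v : Fin N → ℝ × ℝ),
          (∀ i, 0 < k i) ∧
          ∀ p : ℝ × ℝ, (w : ℤ) * rectIndZ 0 s 0 s p =
            ∑ i, c i * T ((p.1 - (v i).1) / (k i : ℝ), (p.2 - (v i).2) / (k i : ℝ)) := by
  classical
  -- common denominator
  set q : ℕ := ∏ i : Fin n, ((b1 i).den * ((b2 i).den * ((c1 i).den * (c2 i).den))) with hqdef
  have hq : 0 < q := Finset.prod_pos (fun i _ => by positivity)
  have hden : ∀ i : Fin n, (b1 i).den ∣ q ∧ (b2 i).den ∣ q ∧ (c1 i).den ∣ q ∧ (c2 i).den ∣ q := by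
    intro i
    have hmem := Finset.dvd_prod_of_mem
      (fun i => ((b1 i).den * ((b2 i).den * ((c1 i).den * (c2 i).den)))) (Finset.mem_univ i)
    exact ⟨dvd_trans (dvd_mul_right _ _) hmem,
      dvd_trans (dvd_mul_of_dvd_right (dvd_mul_right _ _) _) hmem,
      dvd_trans (dvd_mul_of_dvd_right (dvd_mul_of_dvd_right (dvd_mul_right _ _) _) _) hmem,
      dvd_trans (dvd_mul_of_dvd_right (dvd_mul_of_dvd_right (dvd_mul_left _ _) _) _) hmem⟩
  choose B1 hB1 using fun i => int_of_den_dvd (b1 i) q (hden i).1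
  choose B2 hB2 using fun i => int_of_den_dvd (b2 i) q (hden i).2.1
  choose C1 hC1 using fun i => int_of_den_dvd (c1 i) q (hden i).2.2.1
  choose C2 hC2 using fun i => int_of_den_dvd (c2 i) q (hden i).2.2.2
  have hqQ : (0:ℚ) < q := by exact_mod_cast hq
  have hBlt : ∀ i, B1 i ≤ B2 i := by
    intro i
    have : (B1 i : ℚ) ≤ B2 i := by
      rw [hB1 i, hB2 i]
      exact mul_le_mul_of_nonneg_right (le_of_lt (hb i)) hqQ.le
    exact_mod_cast this
  have hClt : ∀ i, C1 i ≤ C2 i := by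
    intro i
    have : (C1 i : ℚ) ≤ C2 i := by
      rw [hC1 i, hC2 i]
      exact mul_le_mul_of_nonneg_right (le_of_lt (hc i)) hqQ.le
    exact_mod_cast this
  -- the tile polynomial
  set P : R2 := ∑ i : Fin n, rectc (a i) (B1 i) (B2 i) (C1 i) (C2 i) with hP
  set A' : ℤ := coefSum P with hA'
  have hA'val : A' = ∑ i : Fin n, (B2 i - B1 i) * (C2 i - C1 i) * a i := by
    rw [hA', hP, map_sum]
    exact Finset.sum_congr rfl fun i _ => coefSum_rectc _ _ _ _ _ (hBlt i) (hClt i)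
  have hA0 : A' ≠ 0 := by
    intro h0
    apply harea
    have hcast : (A' : ℚ) = (q:ℚ)^2 * ∑ i, (a i : ℚ) * (b2 i - b1 i) * (c2 i - c1 i) := by
      rw [hA'val]
      push_cast
      rw [Finset.mul_sum]
      refine Finset.sum_congr rfl fun i _ => ?_
      have e1 : ((B2 i:ℚ) - (B1 i:ℚ)) = (b2 i - b1 i) * q := by rw [hB1 i, hB2 i]; ring
      have e2 : ((C2 i:ℚ) - (C1 i:ℚ)) = (c2 i - c1 i) * q := by rw [hC1 i, hC2 i]; ring
      rw [e1, e2]; ring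
    rw [h0] at hcast
    have hq2 : ((q:ℚ))^2 ≠ 0 := by positivity
    exact (mul_eq_zero.mp hcast.symm).resolve_left hq2
  -- span membership and finite combination
  have hmem := const_mem_span P
  rw [Ideal.span, Finsupp.mem_span_range_iff_exists_finsupp] at hmem
  obtain ⟨cf, hcf⟩ := hmem
  have hcf' : (∑ k ∈ cf.support, cf k * Pk P (k+1)) = sing 0 A' := by
    rw [hA', coefSum_eq]
    have hs : (cf.sum fun i r => r • Pk P (i+1)) = ∑ k ∈ cf.support, cf k * Pk P (k+1) := by
      simp only [smul_eq_mul]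
      rfl
    rw [← hs, hcf]
  -- the big square side
  set m : ℕ := ∏ k ∈ cf.support, (k+1) with hm
  have hm0 : 0 < m := Finset.prod_pos (fun k _ => k.succ_pos)
  have hdvd : ∀ k ∈ cf.support, (k+1) ∣ m := fun k hk => Finset.dvd_prod_of_mem _ hk
  set Q : ℕ → R2 := fun k =>
    cf k * spread ((k+1:ℕ):ℤ) 1 0 ((m/(k+1) : ℕ) : ℤ) 0 ((m/(k+1):ℕ):ℤ) with hQ
  -- main ring identity
  have hRing : rectc A' 0 (m:ℤ) 0 (m:ℤ)
      = ∑ k ∈ cf.support, ∑ d ∈ (Q k).coeff.support, ∑ i : Fin n,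
          rectc ((Q k).coeff d * a i)
            (((k+1:ℕ):ℤ) * B1 i + d.1) (((k+1:ℕ):ℤ) * B2 i + d.1)
            (((k+1:ℕ):ℤ) * C1 i + d.2) (((k+1:ℕ):ℤ) * C2 i + d.2) := by
    have hstart : rectc A' 0 (m:ℤ) 0 (m:ℤ)
        = ∑ k ∈ cf.support, cf k * Pk P (k+1) * rectc 1 0 (m:ℤ) 0 (m:ℤ) := by
      rw [show A' = A' * 1 by ring, ← sing_zero_mul A' 1 0 (m:ℤ) 0 (m:ℤ), ← hcf',
        Finset.sum_mul]
    rw [hstart]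
    refine Finset.sum_congr rfl fun k hk => ?_
    have hκz : (0:ℤ) < ((k+1:ℕ):ℤ) := by exact_mod_cast k.succ_pos
    have hmul : ((k+1:ℕ):ℤ) * ((m/(k+1):ℕ):ℤ) = (m:ℤ) := by
      exact_mod_cast congrArg (fun x : ℕ => (x:ℤ)) (Nat.mul_div_cancel' (hdvd k hk))
    -- split the big square
    have hsplit : rectc 1 0 (m:ℤ) 0 (m:ℤ)
        = rectc 1 0 ((k+1:ℕ):ℤ) 0 ((k+1:ℕ):ℤ)
            * spread ((k+1:ℕ):ℤ) 1 0 ((m/(k+1):ℕ):ℤ) 0 ((m/(k+1):ℕ):ℤ) := by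
      have := master ((k+1:ℕ):ℤ) hκz 0 0 1 1 0 ((m/(k+1):ℕ):ℤ) 0 ((m/(k+1):ℕ):ℤ)
      rw [show sing ((0:ℤ),(0:ℤ)) 1 = 1 from rfl, one_mul] at this
      rw [this]
      simp only [mul_zero, zero_add, add_zero, one_mul, hmul]
    -- decompose `Pk P (k+1)` into spread rectangles
    have hPk : Pk P (k+1) = ∑ i : Fin n,
        spread ((k+1:ℕ):ℤ) (a i) (B1 i) (B2 i) (C1 i) (C2 i) := by
      rw [hP, Pk_sum]
      exact Finset.sum_congr rfl fun i _ => Pk_rectc _ _ _ _ _ _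
    -- expand `Q k` into monomials
    have hQk : Q k = ∑ d ∈ (Q k).coeff.support, sing d ((Q k).coeff d) := by
      apply AddMonoidAlgebra.coeff_injective
      rw [AddMonoidAlgebra.coeff_sum]
      conv_lhs => rw [← Finsupp.sum_single (Q k).coeff]
      rw [Finsupp.sum]
      exact Finset.sum_congr rfl fun d _ => rfl
    calc cf k * Pk P (k+1) * rectc 1 0 (m:ℤ) 0 (m:ℤ)
        = Q k * (rectc 1 0 ((k+1:ℕ):ℤ) 0 ((k+1:ℕ):ℤ) * Pk P (k+1)) := by
          rw [hsplit, hQ]; ring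
      _ = ∑ d ∈ (Q k).coeff.support, sing d ((Q k).coeff d)
            * (rectc 1 0 ((k+1:ℕ):ℤ) 0 ((k+1:ℕ):ℤ) * Pk P (k+1)) := by
          rw [← Finset.sum_mul, ← hQk]
      _ = ∑ d ∈ (Q k).coeff.support, ∑ i : Fin n,
            rectc ((Q k).coeff d * a i)
              (((k+1:ℕ):ℤ) * B1 i + d.1) (((k+1:ℕ):ℤ) * B2 i + d.1)
              (((k+1:ℕ):ℤ) * C1 i + d.2) (((k+1:ℕ):ℤ) * C2 i + d.2) := by
          refine Finset.sum_congr rfl fun d hd => ?_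
          rw [hPk]
          simp only [Finset.mul_sum]
          refine Finset.sum_congr rfl fun i _ => ?_
          obtain ⟨d1, d2⟩ := d
          rw [← mul_assoc]
          exact master ((k+1:ℕ):ℤ) hκz d1 d2 ((Q k).coeff ⟨d1,d2⟩) (a i) (B1 i) (B2 i) (C1 i) (C2 i)
  -- final data
  set S : Finset ((_ : ℕ) × (ℤ × ℤ)) := cf.support.sigma (fun k => (Q k).coeff.support) with hS
  set en := S.equivFin with hen
  set ε : ℤ := if 0 ≤ A' then 1 else -1 with hε
  have hεA : (A'.natAbs : ℤ) = ε * A' := by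
    rw [hε]; split_ifs with h <;> omega
  refine ⟨A'.natAbs, Int.natAbs_pos.mpr hA0, (m:ℝ)/(q:ℝ), by positivity,
    S.card,
    fun i => ε * (Q ((en.symm i) : (_ : ℕ) × (ℤ×ℤ)).1).coeff ((en.symm i) : (_ : ℕ) × (ℤ×ℤ)).2,
    fun i => ((en.symm i) : (_ : ℕ) × (ℤ×ℤ)).1 + 1,
    fun i => (((((en.symm i) : (_ : ℕ) × (ℤ×ℤ)).2.1 : ℝ))/(q:ℝ),
              ((((en.symm i) : (_ : ℕ) × (ℤ×ℤ)).2.2 : ℝ))/(q:ℝ)),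
    fun i => Nat.succ_pos _, ?_⟩
  intro p
  -- evaluate the ring identity at the cell of p
  have hev := congrArg (fun f : R2 => f.coeff (⌊(q:ℝ) * p.1⌋, ⌊(q:ℝ) * p.2⌋)) hRing
  rw [eval_rectc_sq q m hq A' p] at hev
  -- evaluate each term
  have hterm : ∀ k ∈ cf.support, ∀ d ∈ (Q k).coeff.support,
      (∑ i : Fin n, rectc ((Q k).coeff d * a i)
          (((k+1:ℕ):ℤ) * B1 i + d.1) (((k+1:ℕ):ℤ) * B2 i + d.1)
          (((k+1:ℕ):ℤ) * C1 i + d.2) (((k+1:ℕ):ℤ) * C2 i + d.2)).coeff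
        (⌊(q:ℝ) * p.1⌋, ⌊(q:ℝ) * p.2⌋)
      = (Q k).coeff d * T ((p.1 - (d.1:ℝ)/(q:ℝ)) / ((k+1:ℕ):ℝ), (p.2 - (d.2:ℝ)/(q:ℝ)) / ((k+1:ℕ):ℝ)) := by
    intro k hk d hd
    rw [hT, Finset.mul_sum, AddMonoidAlgebra.coeff_sum, Finsupp.finset_sum_apply]
    refine Finset.sum_congr rfl fun i _ => ?_
    rw [rectc_apply, rectIndZ]
    simp only
    have hcong : (((k+1:ℕ):ℤ) * B1 i + d.1 ≤ ⌊(q:ℝ)*p.1⌋ ∧ ⌊(q:ℝ)*p.1⌋ < ((k+1:ℕ):ℤ) * B2 i + d.1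
          ∧ ((k+1:ℕ):ℤ) * C1 i + d.2 ≤ ⌊(q:ℝ)*p.2⌋ ∧ ⌊(q:ℝ)*p.2⌋ < ((k+1:ℕ):ℤ) * C2 i + d.2)
        ↔ (((b1 i : ℚ):ℝ) ≤ (p.1 - (d.1:ℝ)/(q:ℝ)) / ((k+1:ℕ):ℝ)
          ∧ (p.1 - (d.1:ℝ)/(q:ℝ)) / ((k+1:ℕ):ℝ) < ((b2 i : ℚ):ℝ)
          ∧ ((c1 i : ℚ):ℝ) ≤ (p.2 - (d.2:ℝ)/(q:ℝ)) / ((k+1:ℕ):ℝ)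
          ∧ (p.2 - (d.2:ℝ)/(q:ℝ)) / ((k+1:ℕ):ℝ) < ((c2 i : ℚ):ℝ)) := by
      rw [← cond_left q (k+1) hq k.succ_pos (B1 i) d.1 (b1 i) p.1 (hB1 i),
        ← cond_right q (k+1) hq k.succ_pos (B2 i) d.1 (b2 i) p.1 (hB2 i),
        ← cond_left q (k+1) hq k.succ_pos (C1 i) d.2 (c1 i) p.2 (hC1 i),
        ← cond_right q (k+1) hq k.succ_pos (C2 i) d.2 (c2 i) p.2 (hC2 i)]
    rw [if_congr hcong rfl rfl]
    split_ifs <;> ring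
  -- put everything together
  have hRHS : (∑ k ∈ cf.support, ∑ d ∈ (Q k).coeff.support, ∑ i : Fin n,
        rectc ((Q k).coeff d * a i)
          (((k+1:ℕ):ℤ) * B1 i + d.1) (((k+1:ℕ):ℤ) * B2 i + d.1)
          (((k+1:ℕ):ℤ) * C1 i + d.2) (((k+1:ℕ):ℤ) * C2 i + d.2)).coeff
        (⌊(q:ℝ) * p.1⌋, ⌊(q:ℝ) * p.2⌋)
      = ∑ k ∈ cf.support, ∑ d ∈ (Q k).coeff.support, (Q k).coeff d
          * T ((p.1 - (d.1:ℝ)/(q:ℝ)) / ((k+1:ℕ):ℝ), (p.2 - (d.2:ℝ)/(q:ℝ)) / ((k+1:ℕ):ℝ)) := by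
    rw [AddMonoidAlgebra.coeff_sum, Finsupp.finset_sum_apply]
    refine Finset.sum_congr rfl fun k hk => ?_
    rw [AddMonoidAlgebra.coeff_sum, Finsupp.finset_sum_apply]
    exact Finset.sum_congr rfl fun d hd => hterm k hk d hd
  rw [hRHS] at hev
  -- convert the Fin-indexed sum to the sigma sum
  have hfin : ∑ i : Fin S.card,
      (ε * (Q ((en.symm i) : (_ : ℕ) × (ℤ×ℤ)).1).coeff ((en.symm i) : (_ : ℕ) × (ℤ×ℤ)).2)
        * T ((p.1 - ((((en.symm i) : (_ : ℕ) × (ℤ×ℤ)).2.1 : ℝ))/(q:ℝ)) / ((((en.symm i) : (_ : ℕ) × (ℤ×ℤ)).1 + 1 : ℕ):ℝ),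
             (p.2 - ((((en.symm i) : (_ : ℕ) × (ℤ×ℤ)).2.2 : ℝ))/(q:ℝ)) / ((((en.symm i) : (_ : ℕ) × (ℤ×ℤ)).1 + 1 : ℕ):ℝ))
      = ε * ∑ x ∈ S, (Q x.1).coeff x.2
          * T ((p.1 - (x.2.1:ℝ)/(q:ℝ)) / ((x.1+1:ℕ):ℝ), (p.2 - (x.2.2:ℝ)/(q:ℝ)) / ((x.1+1:ℕ):ℝ)) := by
    rw [Finset.mul_sum, ← Finset.sum_coe_sort S]
    rw [← Equiv.sum_comp en.symm (fun x : {x // x ∈ S} =>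
      ε * ((Q (x : (_ : ℕ) × (ℤ×ℤ)).1).coeff (x : (_ : ℕ) × (ℤ×ℤ)).2
        * T ((p.1 - (((x : (_ : ℕ) × (ℤ×ℤ)).2.1 : ℝ))/(q:ℝ)) / (((x : (_ : ℕ) × (ℤ×ℤ)).1+1:ℕ):ℝ),
             (p.2 - (((x : (_ : ℕ) × (ℤ×ℤ)).2.2 : ℝ))/(q:ℝ)) / (((x : (_ : ℕ) × (ℤ×ℤ)).1+1:ℕ):ℝ))))]
    exact Finset.sum_congr rfl fun i _ => by ring
  rw [hfin]
  rw [Finset.sum_sigma]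
  rw [← hev, hεA]
  ring
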